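/- Let E ⊆ ℝⁿ, let γ: [0, L] → ℝⁿ be a non-constant rectifiable path parametrized by arclength, and let N ∈ ℕ. Let F_N be the set of x ∈ ℝⁿ such that E ∩ |γ + x| contains at least N points. Then the outer Lebesgue measure of F_N is at most c(n) · ℓ(γ) · N⁻¹ · H^{n-1}(E), where c(n) depends only on n, ℓ(γ) is the length of γ, and H^{n-1} is the (n-1)-dimensional Hausdorff measure. -/

import Mathlib

open MeasureTheory Set
open scoped ENNReal

/-- A rectifiable curve in `ℝⁿ`, given by its arclength parametrization on `[0, len]`. -/
structure RectCurve (n : ℕ) where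
  len : ℝ
  len_nonneg : 0 ≤ len
  toFun : ℝ → EuclideanSpace ℝ (Fin n)
  arclength : ∀ t ∈ Set.Icc 0 len, eVariationOn toFun (Set.Icc 0 t) = ENNReal.ofReal t

/-- The line integral `∫_γ ρ ds` of a Borel function over a rectifiable curve
(via its arclength parametrization). -/
noncomputable def lineIntegral {n : ℕ} (ρ : EuclideanSpace ℝ (Fin n) → ℝ≥0∞)
    (γ : RectCurve n) : ℝ≥0∞ :=
  ∫⁻ t in Set.Icc 0 γ.len, ρ (γ.toFun t)

/-- A Borel function `ρ ≥ 0` is admissible for a curve family `Γ` if `∫_γ ρ ds ≥ 1`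
for every `γ ∈ Γ`. -/
def Admissible {n : ℕ} (ρ : EuclideanSpace ℝ (Fin n) → ℝ≥0∞) (Γ : Set (RectCurve n)) : Prop :=
  Measurable ρ ∧ ∀ γ ∈ Γ, 1 ≤ lineIntegral ρ γ

/-- The `p`-modulus of a curve family: `inf ∫ ρᵖ` over admissible `ρ`. -/
noncomputable def modulus {n : ℕ} (p : ℝ) (Γ : Set (RectCurve n)) : ℝ≥0∞ :=
  ⨅ (ρ : EuclideanSpace ℝ (Fin n) → ℝ≥0∞) (_ : Admissible ρ Γ), ∫⁻ x, ρ x ^ p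

namespace RectCurve

variable {n : ℕ} (γ : RectCurve n)

lemma dist_le {a b : ℝ} (ha : a ∈ Icc 0 γ.len) (hb : b ∈ Icc 0 γ.len) (hab : a ≤ b) :
    dist (γ.toFun a) (γ.toFun b) ≤ b - a := by
  have h1 := γ.arclength a ha
  have h2 := γ.arclength b hb
  have hadd := eVariationOn.Icc_add_Icc γ.toFun (s := univ) ha.1 hab (mem_univ a)
  simp only [univ_inter] at hadd
  rw [h1, h2] at hadd
  have hb' : ENNReal.ofReal b = ENNReal.ofReal a + ENNReal.ofReal (b - a) := by
    rw [← ENNReal.ofReal_add ha.1 (sub_nonneg.2 hab)]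
    ring_nf
  rw [hb'] at hadd
  have hkey : eVariationOn γ.toFun (Icc a b) = ENNReal.ofReal (b - a) :=
    (ENNReal.add_right_inj ENNReal.ofReal_ne_top).1 hadd
  have hedist := eVariationOn.edist_le γ.toFun (s := Icc a b)
    ⟨le_refl a, hab⟩ ⟨hab, le_refl b⟩
  rw [hkey, edist_dist] at hedist
  exact (ENNReal.ofReal_le_ofReal_iff (sub_nonneg.2 hab)).1 hedist

lemma lipschitzOn : LipschitzOnWith 1 γ.toFun (Icc 0 γ.len) := by
  intro x hx y hy
  have key : ∀ a ∈ Icc (0:ℝ) γ.len, ∀ b ∈ Icc (0:ℝ) γ.len, a ≤ b →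
      edist (γ.toFun a) (γ.toFun b) ≤ 1 * edist a b := by
    intro a ha b hb hab
    rw [edist_dist, one_mul, edist_dist]
    refine ENNReal.ofReal_le_ofReal ?_
    calc dist (γ.toFun a) (γ.toFun b) ≤ b - a := γ.dist_le ha hb hab
      _ ≤ dist a b := by rw [Real.dist_eq, abs_sub_comm]; exact le_abs_self _
  rcases le_total x y with h | h
  · exact key x hx y hy h
  · rw [edist_comm, edist_comm x y]; exact key y hy x hx h

lemma continuousOn : ContinuousOn γ.toFun (Icc 0 γ.len) :=
  γ.lipschitzOn.continuousOn

/-- The set of translations `x` for which the curve `γ + x` meets `closedBall p s`. -/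
def tubeSet (p : EuclideanSpace ℝ (Fin n)) (s : ℝ) : Set (EuclideanSpace ℝ (Fin n)) :=
  {x | ∃ τ ∈ Icc (0:ℝ) γ.len, γ.toFun τ + x ∈ Metric.closedBall p s}

lemma tubeSet_eq_image (p : EuclideanSpace ℝ (Fin n)) (s : ℝ) :
    γ.tubeSet p s = (fun q : ℝ × EuclideanSpace ℝ (Fin n) => q.2 - γ.toFun q.1) ''
      (Icc (0:ℝ) γ.len ×ˢ Metric.closedBall p s) := by
  ext x
  constructor
  · rintro ⟨τ, hτ, hb⟩
    exact ⟨(τ, γ.toFun τ + x), ⟨hτ, hb⟩, by simp⟩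
  · rintro ⟨⟨τ, b⟩, ⟨hτ, hb⟩, rfl⟩
    exact ⟨τ, hτ, by simpa using hb⟩

lemma isCompact_tubeSet (p : EuclideanSpace ℝ (Fin n)) (s : ℝ) :
    IsCompact (γ.tubeSet p s) := by
  rw [tubeSet_eq_image]
  refine (isCompact_Icc.prod (isCompact_closedBall p s)).image_of_continuousOn ?_
  refine ContinuousOn.sub continuous_snd.continuousOn ?_
  exact (γ.continuousOn).comp continuous_fst.continuousOn (fun q hq => hq.1)

lemma measurableSet_tubeSet (p : EuclideanSpace ℝ (Fin n)) (s : ℝ) :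
    MeasurableSet (γ.tubeSet p s) :=
  (γ.isCompact_tubeSet p s).measurableSet

/-- The tube bound: the set of translations of `γ` meeting a ball of radius `s ≤ len`
has volume at most `C(n) · len · s^(n-1)`. -/
lemma volume_tubeSet_le (hn : 1 ≤ n) (p : EuclideanSpace ℝ (Fin n)) {s : ℝ}
    (hs : 0 < s) (hsL : s ≤ γ.len) :
    volume (γ.tubeSet p s) ≤ 3 * 2 ^ n * volume (Metric.ball (0 : EuclideanSpace ℝ (Fin n)) 1)
      * ENNReal.ofReal γ.len * ENNReal.ofReal s ^ ((n : ℝ) - 1) := by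
  set L := γ.len with hLdef
  have hL : 0 < L := lt_of_lt_of_le hs hsL
  set K : ℕ := ⌈L / s⌉₊ with hK
  have hcov : γ.tubeSet p s ⊆
      ⋃ k ∈ Finset.range (K + 1), Metric.closedBall (p - γ.toFun (k * s)) (2 * s) := by
    rintro x ⟨τ, hτ, hb⟩
    set k : ℕ := ⌊τ / s⌋₊ with hk
    have hks_le : (k : ℝ) * s ≤ τ := by
      rw [hk]
      calc (⌊τ / s⌋₊ : ℝ) * s ≤ τ / s * s := by
            gcongr; exact Nat.floor_le (div_nonneg hτ.1 hs.le)
        _ = τ := div_mul_cancel₀ τ hs.ne'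
    have hτk : τ - k * s ≤ s := by
      have h := Nat.lt_floor_add_one (τ / s)
      have := (div_lt_iff₀ hs).1 h
      nlinarith
    have hkK : k ∈ Finset.range (K + 1) := by
      refine Finset.mem_range.2 (Nat.lt_succ_of_le ?_)
      exact le_trans (Nat.floor_mono (by gcongr; exact hτ.2)) (Nat.floor_le_ceil _)
    refine mem_iUnion₂.2 ⟨k, hkK, ?_⟩
    have hksIcc : (k : ℝ) * s ∈ Icc (0:ℝ) L :=
      ⟨by positivity, le_trans hks_le hτ.2⟩
    have h1 : dist (γ.toFun ((k : ℝ) * s)) (γ.toFun τ) ≤ s := by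
      calc dist (γ.toFun ((k:ℝ)*s)) (γ.toFun τ) ≤ τ - k * s := γ.dist_le hksIcc hτ hks_le
        _ ≤ s := hτk
    have h2 : dist (γ.toFun τ + x) p ≤ s := hb
    calc dist x (p - γ.toFun ((k:ℝ)*s))
        ≤ dist x (p - γ.toFun τ) + dist (p - γ.toFun τ) (p - γ.toFun ((k:ℝ)*s)) :=
          dist_triangle _ _ _
      _ ≤ s + s := by
          refine add_le_add ?_ ?_
          · calc dist x (p - γ.toFun τ) = dist (γ.toFun τ + x) p := by
                  rw [dist_eq_norm, dist_eq_norm]; congr 1; abel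
              _ ≤ s := h2
          · calc dist (p - γ.toFun τ) (p - γ.toFun ((k:ℝ)*s))
                = dist (γ.toFun τ) (γ.toFun ((k:ℝ)*s)) := by
                  rw [dist_eq_norm, dist_eq_norm, sub_sub_sub_cancel_left, norm_sub_rev]
              _ ≤ s := by rw [dist_comm]; exact h1
      _ = 2 * s := by ring
  set B := volume (Metric.ball (0 : EuclideanSpace ℝ (Fin n)) 1) with hB
  have hball : ∀ k : ℕ, volume (Metric.closedBall (p - γ.toFun (k * s)) (2 * s))
      = ENNReal.ofReal ((2 * s) ^ n) * B := by
    intro k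
    rw [MeasureTheory.Measure.addHaar_closedBall _ _ (by positivity : (0:ℝ) ≤ 2 * s),
      finrank_euclideanSpace_fin]
  have hreal : ((K : ℝ) + 1) * (2 * s) ^ n ≤ 3 * 2 ^ n * L * s ^ (n - 1) := by
    have h1 : (K : ℝ) < L / s + 1 := by
      rw [hK]
      exact Nat.ceil_lt_add_one (by positivity)
    have h2 : (1 : ℝ) ≤ L / s := (one_le_div hs).2 hsL
    have h3 : (K : ℝ) + 1 ≤ 3 * (L / s) := by linarith
    have h4 : (2 * s) ^ n = 2 ^ n * (s ^ (n - 1) * s) := by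
      rw [mul_pow]
      congr 1
      rw [← pow_succ, Nat.sub_add_cancel hn]
    calc ((K : ℝ) + 1) * (2 * s) ^ n ≤ 3 * (L / s) * (2 * s) ^ n := by
          have : (0:ℝ) ≤ (2 * s) ^ n := by positivity
          gcongr
      _ = 3 * 2 ^ n * L * s ^ (n - 1) := by
          rw [h4]
          field_simp
  calc volume (γ.tubeSet p s)
      ≤ volume (⋃ k ∈ Finset.range (K + 1),
          Metric.closedBall (p - γ.toFun (k * s)) (2 * s)) := measure_mono hcov
    _ ≤ ∑ k ∈ Finset.range (K + 1),
          volume (Metric.closedBall (p - γ.toFun (k * s)) (2 * s)) :=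
        measure_biUnion_finset_le _ _
    _ = (K + 1 : ℕ) * (ENNReal.ofReal ((2 * s) ^ n) * B) := by
        simp [hball, Finset.sum_const]
    _ ≤ ENNReal.ofReal (3 * 2 ^ n * L * s ^ (n - 1)) * B := by
        rw [← mul_assoc]
        gcongr
        calc ((K + 1 : ℕ) : ℝ≥0∞) * ENNReal.ofReal ((2 * s) ^ n)
            = ENNReal.ofReal (((K : ℝ) + 1) * (2 * s) ^ n) := by
              rw [ENNReal.ofReal_mul (by positivity)]
              congr 1
              rw [← ENNReal.ofReal_natCast (K + 1)]
              push_cast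
              ring_nf
          _ ≤ ENNReal.ofReal (3 * 2 ^ n * L * s ^ (n - 1)) :=
              ENNReal.ofReal_le_ofReal hreal
    _ ≤ 3 * 2 ^ n * B * ENNReal.ofReal L * ENNReal.ofReal s ^ ((n : ℝ) - 1) := by
        rw [show ((n : ℝ) - 1) = ((n - 1 : ℕ) : ℝ) by
          rw [Nat.cast_sub hn]; push_cast; ring]
        rw [ENNReal.rpow_natCast]
        rw [ENNReal.ofReal_mul (by positivity), ENNReal.ofReal_mul (by positivity),
          ENNReal.ofReal_mul (by norm_num : (0:ℝ) ≤ 3), ENNReal.ofReal_pow hs.le]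
        have h3 : ENNReal.ofReal (3:ℝ) = 3 := by
          simp [ENNReal.ofReal_ofNat]
        have h2 : ENNReal.ofReal ((2:ℝ) ^ n) = 2 ^ n := by
          rw [ENNReal.ofReal_pow (by norm_num)]
          simp [ENNReal.ofReal_ofNat]
        rw [h3, h2]
        ring_nf
        exact le_refl _

end RectCurve

/-- Chebyshev-type inequality: if every point of `F` lies in at least `N` of the
measurable sets `A i`, then `N · μ F ≤ ∑ μ (A i)`. -/
lemma cheb {X : Type*} [MeasurableSpace X] (μ : Measure X) (A : ℕ → Set X)
    (hA : ∀ i, MeasurableSet (A i)) (N : ℕ) (F : Set X)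
    (hF : ∀ x ∈ F, ∃ I : Finset ℕ, N ≤ I.card ∧ ∀ i ∈ I, x ∈ A i) :
    (N : ℝ≥0∞) * μ F ≤ ∑' i, μ (A i) := by
  set f : X → ℝ≥0∞ := fun x => ∑' i, (A i).indicator 1 x with hf
  have hfm : Measurable f := Measurable.ennreal_tsum fun i => measurable_one.indicator (hA i)
  set G : Set X := {x | (N : ℝ≥0∞) ≤ f x} with hG
  have hGm : MeasurableSet G := measurableSet_le measurable_const hfm
  have hFG : F ⊆ G := by
    intro x hx
    obtain ⟨I, hcard, hmem⟩ := hF x hx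
    have hsum : ∑ i ∈ I, (A i).indicator (1 : X → ℝ≥0∞) x = (I.card : ℝ≥0∞) := by
      rw [Finset.sum_congr rfl (fun i hi =>
        Set.indicator_of_mem (hmem i hi) (1 : X → ℝ≥0∞))]
      simp
    have hNle : (N : ℝ≥0∞) ≤ ∑ i ∈ I, (A i).indicator 1 x := by
      rw [hsum]; exact_mod_cast hcard
    exact le_trans hNle (ENNReal.sum_le_tsum I)
  calc (N : ℝ≥0∞) * μ F ≤ (N : ℝ≥0∞) * μ G := by
        exact mul_le_mul_right (measure_mono hFG) _
    _ = ∫⁻ _ in G, (N : ℝ≥0∞) ∂μ := by rw [setLIntegral_const]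
    _ ≤ ∫⁻ x in G, f x ∂μ := setLIntegral_mono hfm (fun x hx => hx)
    _ ≤ ∫⁻ x, f x ∂μ := setLIntegral_le_lintegral _ _
    _ = ∑' i, ∫⁻ x, (A i).indicator 1 x ∂μ :=
        lintegral_tsum fun i => (measurable_one.indicator (hA i)).aemeasurable
    _ = ∑' i, μ (A i) := by
        congr 1
        ext i
        exact lintegral_indicator_one (hA i)

/-- Extraction of an efficient cover from the Hausdorff measure. -/
lemma cover_extract {X : Type*} [MetricSpace X] [MeasurableSpace X] [BorelSpace X]
    (d : ℝ) (E : Set X) (hfin : μH[d] E ≠ ⊤) {δ : ℝ} (hδ : 0 < δ) {ε : ℝ≥0∞} (hε : 0 < ε) :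
    ∃ t : ℕ → Set X, (E ⊆ ⋃ i, t i) ∧ (∀ i, EMetric.diam (t i) ≤ ENNReal.ofReal δ) ∧
      ∑' i, ⨆ _ : (t i).Nonempty, EMetric.diam (t i) ^ d ≤ μH[d] E + ε := by
  have happ := MeasureTheory.Measure.hausdorffMeasure_apply d E
  have hle : ⨅ (t : ℕ → Set X) (_ : E ⊆ ⋃ i, t i)
      (_ : ∀ i, EMetric.diam (t i) ≤ ENNReal.ofReal δ),
      ∑' i, ⨆ _ : (t i).Nonempty, EMetric.diam (t i) ^ d ≤ μH[d] E := by
    rw [happ]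
    refine le_iSup_of_le (ENNReal.ofReal δ) ?_
    exact le_iSup_of_le (ENNReal.ofReal_pos.2 hδ) le_rfl
  have hlt : ⨅ (t : ℕ → Set X) (_ : E ⊆ ⋃ i, t i)
      (_ : ∀ i, EMetric.diam (t i) ≤ ENNReal.ofReal δ),
      ∑' i, ⨆ _ : (t i).Nonempty, EMetric.diam (t i) ^ d < μH[d] E + ε :=
    lt_of_le_of_lt hle (ENNReal.lt_add_right hfin hε.ne')
  rw [iInf_lt_iff] at hlt
  obtain ⟨t, ht⟩ := hlt
  rw [iInf_lt_iff] at ht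
  obtain ⟨hcov, ht⟩ := ht
  rw [iInf_lt_iff] at ht
  obtain ⟨hdiam, ht⟩ := ht
  exact ⟨t, hcov, hdiam, ht.le⟩

set_option maxHeartbeats 1000000 in
/-- There is a constant `C = C(n)` such that for every set `E ⊆ ℝⁿ`,
every non-constant rectifiable path `γ` (parametrized by arclength) and every `N ≥ 1`,
the outer measure of the set of `x` such that `E ∩ |γ + x|` contains at least `N` points
is at most `C · ℓ(γ) · N⁻¹ · H^{n-1}(E)`. -/
theorem stmt_8 (n : ℕ) :
    ∃ C : ℝ≥0∞, 0 < C ∧ C ≠ ⊤ ∧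
      ∀ (E : Set (EuclideanSpace ℝ (Fin n))) (γ : RectCurve n), 0 < γ.len →
        ∀ N : ℕ, 0 < N →
          volume {x : EuclideanSpace ℝ (Fin n) |
              (N : ℕ∞) ≤ (E ∩ (fun t => γ.toFun t + x) '' Set.Icc 0 γ.len).encard} ≤
            C * ENNReal.ofReal γ.len * (N : ℝ≥0∞)⁻¹ * μH[(n : ℝ) - 1] E := by
  classical
  set B := volume (Metric.ball (0 : EuclideanSpace ℝ (Fin n)) 1) with hB
  have hBfin : B ≠ ⊤ := measure_ball_lt_top.ne
  set C0 : ℝ≥0∞ := 3 * 2 ^ n * B with hC0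
  have hC0fin : C0 ≠ ⊤ := by
    refine ENNReal.mul_ne_top (ENNReal.mul_ne_top ?_ ?_) hBfin
    · exact ENNReal.ofNat_ne_top
    · exact ENNReal.pow_ne_top ENNReal.ofNat_ne_top
  refine ⟨C0 + 1, lt_of_lt_of_le zero_lt_one le_add_self,
    by simpa using hC0fin, ?_⟩
  intro E γ hL N hN
  -- the case `n = 0` is vacuous
  by_cases hn : n = 0
  · exfalso
    subst hn
    have h := γ.arclength γ.len ⟨γ.len_nonneg, le_refl _⟩
    have hconst : (γ.toFun '' Icc 0 γ.len).Subsingleton := by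
      intro a _ b _
      ext i; exact i.elim0
    have h0 := eVariationOn.constant_on hconst
    rw [h] at h0
    exact (ENNReal.ofReal_pos.2 hL).ne' h0
  have hn1 : 1 ≤ n := Nat.one_le_iff_ne_zero.2 hn
  set d : ℝ := (n : ℝ) - 1 with hd
  have hd0 : (0:ℝ) ≤ d := by
    rw [hd, sub_nonneg]
    exact_mod_cast hn1
  set L := γ.len with hLdef
  by_cases hμ : μH[d] E = ⊤
  · rw [hμ]
    refine le_trans le_top (le_of_eq ?_)
    rw [ENNReal.mul_top]
    refine mul_ne_zero (mul_ne_zero ?_ ?_) ?_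
    · simp
    · exact (ENNReal.ofReal_pos.2 hL).ne'
    · exact ENNReal.inv_ne_zero.2 (ENNReal.natCast_ne_top N)
  -- main case: `μH[d] E < ∞`
  set F : ℕ → Set (EuclideanSpace ℝ (Fin n)) := fun m =>
    {x | ∃ S : Finset (EuclideanSpace ℝ (Fin n)),
      ↑S ⊆ E ∩ (fun t => γ.toFun t + x) '' Icc 0 L ∧ S.card = N ∧
      ∀ a ∈ S, ∀ b ∈ S, a ≠ b → 1 / ((m:ℝ) + 1) ≤ dist a b} with hF
  have hmono : Monotone F := by
    intro m m' hmm x hx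
    obtain ⟨S, h1, h2, h3⟩ := hx
    refine ⟨S, h1, h2, fun a ha b hb hab => le_trans ?_ (h3 a ha b hb hab)⟩
    apply one_div_le_one_div_of_le
    · positivity
    · have : (m:ℝ) ≤ (m':ℝ) := by exact_mod_cast hmm
      linarith
  have hsub : {x : EuclideanSpace ℝ (Fin n) |
      (N : ℕ∞) ≤ (E ∩ (fun t => γ.toFun t + x) '' Icc 0 L).encard} ⊆ ⋃ m, F m := by
    intro x hx
    obtain ⟨T, hT, hTenc⟩ := Set.exists_subset_encard_eq hx
    have hTfin : T.Finite := Set.finite_of_encard_eq_coe hTenc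
    set S := hTfin.toFinset with hS
    have hScard : S.card = N := by
      have := hTfin.encard_eq_coe_toFinset_card
      rw [hTenc] at this
      exact_mod_cast this.symm
    have hScoe : ↑S ⊆ E ∩ (fun t => γ.toFun t + x) '' Icc 0 L := by
      rw [hS, Set.Finite.coe_toFinset]; exact hT
    by_cases hoff : S.offDiag.Nonempty
    · set r : ℝ := (S.offDiag.image (fun q => dist q.1 q.2)).min' (hoff.image _) with hr
      have hrpos : 0 < r := by
        have hmem := (S.offDiag.image (fun q => dist q.1 q.2)).min'_mem (hoff.image _)
        rw [Finset.mem_image] at hmem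
        obtain ⟨⟨a, b⟩, hq, hval⟩ := hmem
        rw [Finset.mem_offDiag] at hq
        rw [hr, ← hval]
        exact dist_pos.2 hq.2.2
      refine mem_iUnion.2 ⟨⌈1/r⌉₊, S, hScoe, hScard, fun a ha b hb hab => ?_⟩
      have h1 : 1/r ≤ (⌈1/r⌉₊:ℝ) + 1 := le_trans (Nat.le_ceil _) (by linarith)
      have h2 : 1/((⌈1/r⌉₊:ℝ) + 1) ≤ r := by
        rw [div_le_iff₀ (by positivity)]
        have := (div_le_iff₀ hrpos).1 h1
        nlinarith
      refine le_trans h2 ?_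
      refine (S.offDiag.image (fun q => dist q.1 q.2)).min'_le _ ?_
      exact Finset.mem_image.2 ⟨(a, b), Finset.mem_offDiag.2 ⟨ha, hb, hab⟩, rfl⟩
    · refine mem_iUnion.2 ⟨0, S, hScoe, hScard, fun a ha b hb hab => ?_⟩
      exact absurd ⟨(a, b), Finset.mem_offDiag.2 ⟨ha, hb, hab⟩⟩ hoff
  -- the per-`m` bound
  have key : ∀ m : ℕ, volume (F m) ≤ C0 * ENNReal.ofReal L * (N:ℝ≥0∞)⁻¹ * μH[d] E := by
    intro m
    set δ : ℝ := min L (1 / (5 * ((m:ℝ) + 1))) with hδdef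
    have hδ : 0 < δ := lt_min hL (by positivity)
    have hδL : δ ≤ L := min_le_left _ _
    set Kc : ℝ≥0∞ := C0 * ENNReal.ofReal L * (N:ℝ≥0∞)⁻¹ with hKc
    have hKcfin : Kc ≠ ⊤ := by
      refine ENNReal.mul_ne_top (ENNReal.mul_ne_top hC0fin ENNReal.ofReal_ne_top) ?_
      exact ENNReal.inv_ne_top.2 (by exact_mod_cast hN.ne')
    rw [show C0 * ENNReal.ofReal L * (N:ℝ≥0∞)⁻¹ * μH[d] E = Kc * μH[d] E by rw [hKc]]
    refine ENNReal.le_of_forall_pos_le_add fun η hη _ => ?_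
    set ε : ℝ≥0∞ := (η : ℝ≥0∞) / (2 * Kc + 1) with hε
    have hεpos : 0 < ε := by
      refine ENNReal.div_pos (by exact_mod_cast hη.ne') ?_
      exact ENNReal.add_ne_top.2 ⟨ENNReal.mul_ne_top ENNReal.ofNat_ne_top hKcfin, ENNReal.one_ne_top⟩
    have hεfin : ε ≠ ⊤ := by
      refine (ENNReal.div_lt_top ENNReal.coe_ne_top ?_).ne
      simp
    obtain ⟨t, hcov, hdiam, hsum⟩ := cover_extract d E hμ hδ hεpos
    have hdiam_fin : ∀ i, EMetric.diam (t i) ≠ ⊤ :=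
      fun i => (lt_of_le_of_lt (hdiam i) ENNReal.ofReal_lt_top).ne
    have hbdd : ∀ i, Bornology.IsBounded (t i) := by
      intro i
      rw [Metric.isBounded_iff_ediam_ne_top]
      exact hdiam_fin i
    have hdiam_real : ∀ i, Metric.diam (t i) ≤ δ :=
      fun i => ENNReal.toReal_le_of_le_ofReal hδ.le (hdiam i)
    -- the auxiliary radii
    set c : ℕ → ℝ := fun i => min δ (((ε * 2⁻¹ ^ (i+1)) ^ (1/d)).toReal) with hc
    have hwne : ∀ i : ℕ, (ε * 2⁻¹ ^ (i+1) : ℝ≥0∞) ≠ 0 := by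
      intro i
      exact mul_ne_zero hεpos.ne' (pow_ne_zero _ (ENNReal.inv_ne_zero.2 ENNReal.ofNat_ne_top))
    have hwfin : ∀ i : ℕ, (ε * 2⁻¹ ^ (i+1) : ℝ≥0∞) ≠ ⊤ := by
      intro i
      exact ENNReal.mul_ne_top hεfin (ENNReal.pow_ne_top (by simp))
    have hcpos : ∀ i, 0 < c i := by
      intro i
      refine lt_min hδ (ENNReal.toReal_pos ?_ ?_)
      · exact (ENNReal.rpow_pos (pos_iff_ne_zero.2 (hwne i)) (hwfin i)).ne'
      · exact (ENNReal.rpow_lt_top_of_nonneg (by positivity) (hwfin i)).ne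
    set s : ℕ → ℝ := fun i => max (Metric.diam (t i)) (c i) with hs
    have hspos : ∀ i, 0 < s i := fun i => lt_of_lt_of_le (hcpos i) (le_max_right _ _)
    have hsδ : ∀ i, s i ≤ δ := fun i => max_le (hdiam_real i) (min_le_left _ _)
    have hsL : ∀ i, s i ≤ L := fun i => (hsδ i).trans hδL
    -- the points
    set p : ℕ → EuclideanSpace ℝ (Fin n) := fun i =>
      if h : (t i).Nonempty then h.some else 0 with hp
    have hsub_ball : ∀ i, (t i).Nonempty → t i ⊆ Metric.closedBall (p i) (s i) := by
      intro i hi q hq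
      have hpi : p i ∈ t i := by rw [hp]; simp only [dif_pos hi]; exact hi.some_mem
      calc dist q (p i) ≤ Metric.diam (t i) := Metric.dist_le_diam_of_mem (hbdd i) hq hpi
        _ ≤ s i := le_max_left _ _
    -- the tube sets
    set A : ℕ → Set (EuclideanSpace ℝ (Fin n)) := fun i =>
      if (t i).Nonempty then γ.tubeSet (p i) (s i) else ∅ with hA
    have hAm : ∀ i, MeasurableSet (A i) := by
      intro i
      by_cases h : (t i).Nonempty
      · rw [hA]; simp only [if_pos h]; exact γ.measurableSet_tubeSet _ _
      · rw [hA]; simp only [if_neg h]; exact MeasurableSet.empty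
    -- counting
    have hcount : ∀ x ∈ F m, ∃ I : Finset ℕ, N ≤ I.card ∧ ∀ i ∈ I, x ∈ A i := by
      intro x hx
      obtain ⟨S, hSsub, hScard, hSdist⟩ := hx
      set idx : EuclideanSpace ℝ (Fin n) → ℕ := fun e =>
        if h : ∃ i, e ∈ t i then h.choose else 0 with hidxdef
      have hidx : ∀ e ∈ S, e ∈ t (idx e) := by
        intro e he
        have heE : e ∈ E := (hSsub he).1
        have hex : ∃ i, e ∈ t i := mem_iUnion.1 (hcov heE)
        rw [hidxdef]
        simp only [dif_pos hex]
        exact hex.choose_spec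
      have hinj : Set.InjOn idx ↑S := by
        intro a ha b hb hab
        by_contra hne
        have h1 : dist a b ≤ Metric.diam (t (idx a)) := by
          refine Metric.dist_le_diam_of_mem (hbdd _) (hidx a ha) ?_
          rw [hab]; exact hidx b hb
        have h2 : dist a b ≤ δ := h1.trans (hdiam_real _)
        have h3 : 1 / ((m:ℝ) + 1) ≤ dist a b := hSdist a ha b hb hne
        have h4 : δ ≤ 1 / (5 * ((m:ℝ) + 1)) := min_le_right _ _
        have h5 : 1 / (5 * ((m:ℝ) + 1)) < 1 / ((m:ℝ) + 1) := by
          apply one_div_lt_one_div_of_lt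
          · positivity
          · nlinarith [Nat.cast_nonneg (α := ℝ) m]
        linarith
      refine ⟨S.image idx, ?_, ?_⟩
      · rw [Finset.card_image_of_injOn hinj, hScard]
      · intro i hi
        rw [Finset.mem_image] at hi
        obtain ⟨e, he, rfl⟩ := hi
        have hne : (t (idx e)).Nonempty := ⟨e, hidx e he⟩
        rw [hA]
        simp only [if_pos hne]
        obtain ⟨τ, hτ, heq⟩ := (hSsub he).2
        have heq' : γ.toFun τ + x = e := heq
        exact ⟨τ, hτ, by rw [heq']; exact hsub_ball _ hne (hidx e he)⟩
    -- per-index volume bound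
    have hvol : ∀ i, volume (A i) ≤ C0 * ENNReal.ofReal L *
        ⨆ _ : (t i).Nonempty, ENNReal.ofReal (s i) ^ d := by
      intro i
      by_cases h : (t i).Nonempty
      · rw [hA]
        simp only [if_pos h, iSup_pos h]
        have := γ.volume_tubeSet_le hn1 (p i) (hspos i) (hsL i)
        rw [hd]
        calc volume (γ.tubeSet (p i) (s i))
            ≤ 3 * 2 ^ n * B * ENNReal.ofReal L * ENNReal.ofReal (s i) ^ ((n:ℝ) - 1) := this
          _ = C0 * ENNReal.ofReal L * ENNReal.ofReal (s i) ^ ((n:ℝ) - 1) := by rw [hC0]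
      · rw [hA]
        simp [if_neg h]
    -- the sum bound
    have hterm : ∀ i, (⨆ _ : (t i).Nonempty, ENNReal.ofReal (s i) ^ d) ≤
        (⨆ _ : (t i).Nonempty, EMetric.diam (t i) ^ d) + ε * 2⁻¹ ^ (i+1) := by
      intro i
      by_cases h : (t i).Nonempty
      · rw [iSup_pos h, iSup_pos h]
        have hofs : ENNReal.ofReal (s i) =
            max (EMetric.diam (t i)) (ENNReal.ofReal (c i)) := by
          rw [hs]
          have hmax : ENNReal.ofReal (max (Metric.diam (t i)) (c i)) =
              max (ENNReal.ofReal (Metric.diam (t i))) (ENNReal.ofReal (c i)) :=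
            Monotone.map_max (fun _ _ hh => ENNReal.ofReal_le_ofReal hh)
          rw [hmax, Metric.diam]; exact congrArg (max · _) (ENNReal.ofReal_toReal (hdiam_fin i))
        have hkey : ENNReal.ofReal (c i) ^ d ≤ EMetric.diam (t i) ^ d + ε * 2⁻¹ ^ (i+1) := by
          by_cases hdz : d = 0
          · rw [hdz]
            simp only [ENNReal.rpow_zero]
            exact le_add_right (le_refl 1)
          · have hdpos : 0 < d := lt_of_le_of_ne hd0 (Ne.symm hdz)
            have h1 : ENNReal.ofReal (c i) ≤ (ε * 2⁻¹ ^ (i+1)) ^ (1/d) := by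
              calc ENNReal.ofReal (c i)
                  ≤ ENNReal.ofReal (((ε * 2⁻¹ ^ (i+1)) ^ (1/d)).toReal) :=
                    ENNReal.ofReal_le_ofReal (min_le_right _ _)
                _ = (ε * 2⁻¹ ^ (i+1)) ^ (1/d) := ENNReal.ofReal_toReal
                    (ENNReal.rpow_lt_top_of_nonneg (by positivity) (hwfin i)).ne
            calc ENNReal.ofReal (c i) ^ d ≤ ((ε * 2⁻¹ ^ (i+1)) ^ (1/d)) ^ d :=
                  ENNReal.rpow_le_rpow h1 hd0
              _ = ε * 2⁻¹ ^ (i+1) := by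
                  rw [← ENNReal.rpow_mul, one_div, inv_mul_cancel₀ hdz, ENNReal.rpow_one]
              _ ≤ EMetric.diam (t i) ^ d + ε * 2⁻¹ ^ (i+1) := le_add_self
        rw [hofs]
        rcases le_total (ENNReal.ofReal (c i)) (EMetric.diam (t i)) with hcase | hcase
        · rw [max_eq_left hcase]
          exact le_add_right (le_refl _)
        · rw [max_eq_right hcase]
          exact hkey
      · simp [iSup_neg h]
    have hgeom : ∑' i : ℕ, (ε * 2⁻¹ ^ (i+1)) = ε := by
      rw [ENNReal.tsum_mul_left]
      have h1 : ∑' i : ℕ, ((2:ℝ≥0∞)⁻¹) ^ (i+1) = 2⁻¹ * ∑' i : ℕ, ((2:ℝ≥0∞)⁻¹) ^ i := by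
        rw [← ENNReal.tsum_mul_left]
        congr 1
        ext i
        rw [pow_succ]
        ring
      rw [h1, ENNReal.tsum_geometric, ENNReal.one_sub_inv_two, inv_inv]
      rw [ENNReal.inv_mul_cancel (by norm_num) (by norm_num), mul_one]
    have hsum2 : ∑' i, (⨆ _ : (t i).Nonempty, ENNReal.ofReal (s i) ^ d) ≤
        μH[d] E + 2 * ε := by
      calc ∑' i, (⨆ _ : (t i).Nonempty, ENNReal.ofReal (s i) ^ d)
          ≤ ∑' i, ((⨆ _ : (t i).Nonempty, EMetric.diam (t i) ^ d) + ε * 2⁻¹ ^ (i+1)) :=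
            ENNReal.tsum_le_tsum hterm
        _ = (∑' i, ⨆ _ : (t i).Nonempty, EMetric.diam (t i) ^ d)
            + ∑' i, (ε * 2⁻¹ ^ (i+1)) := ENNReal.tsum_add
        _ ≤ (μH[d] E + ε) + ε := add_le_add hsum (le_of_eq hgeom)
        _ = μH[d] E + 2 * ε := by ring
    -- combine
    have hcheb := cheb volume A hAm N (F m) hcount
    have hmain : (N : ℝ≥0∞) * volume (F m) ≤ C0 * ENNReal.ofReal L * (μH[d] E + 2 * ε) := by
      calc (N : ℝ≥0∞) * volume (F m) ≤ ∑' i, volume (A i) := hcheb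
        _ ≤ ∑' i, (C0 * ENNReal.ofReal L *
            ⨆ _ : (t i).Nonempty, ENNReal.ofReal (s i) ^ d) := ENNReal.tsum_le_tsum hvol
        _ = C0 * ENNReal.ofReal L *
            ∑' i, (⨆ _ : (t i).Nonempty, ENNReal.ofReal (s i) ^ d) := ENNReal.tsum_mul_left
        _ ≤ C0 * ENNReal.ofReal L * (μH[d] E + 2 * ε) := mul_le_mul_right hsum2 _
    have hNne : (N : ℝ≥0∞) ≠ 0 := by exact_mod_cast hN.ne'
    calc volume (F m) = (N : ℝ≥0∞)⁻¹ * ((N : ℝ≥0∞) * volume (F m)) := by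
          rw [← mul_assoc, ENNReal.inv_mul_cancel hNne (ENNReal.natCast_ne_top N), one_mul]
      _ ≤ (N : ℝ≥0∞)⁻¹ * (C0 * ENNReal.ofReal L * (μH[d] E + 2 * ε)) :=
          mul_le_mul_right hmain _
      _ = Kc * μH[d] E + Kc * (2 * ε) := by rw [hKc]; ring
      _ ≤ Kc * μH[d] E + η := by
          refine add_le_add_right ?_ _
          calc Kc * (2 * ε) = (2 * Kc) * ε := by ring
            _ ≤ (2 * Kc + 1) * ((η : ℝ≥0∞) / (2 * Kc + 1)) := by
                rw [hε]
                exact mul_le_mul' le_self_add (le_refl _)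
            _ = (η : ℝ≥0∞) := by
                rw [mul_comm]
                refine ENNReal.div_mul_cancel ?_ ?_
                · simp
                · exact ENNReal.add_ne_top.2
                    ⟨ENNReal.mul_ne_top ENNReal.ofNat_ne_top hKcfin, ENNReal.one_ne_top⟩
  -- conclude
  calc volume {x : EuclideanSpace ℝ (Fin n) |
        (N : ℕ∞) ≤ (E ∩ (fun t => γ.toFun t + x) '' Icc 0 γ.len).encard}
      ≤ volume (⋃ m, F m) := measure_mono hsub
    _ = ⨆ m, volume (F m) := hmono.measure_iUnion
    _ ≤ C0 * ENNReal.ofReal L * (N:ℝ≥0∞)⁻¹ * μH[d] E := iSup_le key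
    _ ≤ (C0 + 1) * ENNReal.ofReal γ.len * (N:ℝ≥0∞)⁻¹ * μH[(n:ℝ) - 1] E := by
        rw [← hd, ← hLdef]
        gcongr
        exact le_self_add
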